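/- For any non-negative integer q and positive integer n, F_q(n) := Σ_{d | n} (μ(d)/d) (log d)^q = O( f(n,1) (log log n)^q ), where f(n,s) := ∏_{p | n} (1 − p^{−s}) and μ is the Möbius function. -/

import Mathlib

open Filter Finset

/-- `f(n,s) = ∏_{p | n} (1 − p^{−s})` (for real `s`). -/
noncomputable def fEuler (n : ℕ) (s : ℝ) : ℝ :=
  ∏ p ∈ n.primeFactors, (1 - (p : ℝ) ^ (-s))

noncomputable def fP (P : Finset ℕ) : ℝ := ∏ p ∈ P, (1 - 1/(p:ℝ))

noncomputable def GG (q : ℕ) (P : Finset ℕ) : ℝ :=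
  ∑ T ∈ P.powerset, (-1 : ℝ)^T.card / (∏ p ∈ T, (p:ℝ)) * (∑ p ∈ T, Real.log p)^q

lemma GG_insert (q : ℕ) (P : Finset ℕ) (p : ℕ) (hp : p ∉ P) :
    GG q (insert p P) = GG q P
      - (1/p) * ∑ j ∈ Finset.range (q+1),
          (q.choose j : ℝ) * (Real.log p)^(q-j) * GG j P := by
  classical
  unfold GG
  rw [Finset.powerset_insert, Finset.sum_union]
  · rw [Finset.sum_image (fun T hT U hU h => by
      rw [Finset.mem_coe, Finset.mem_powerset] at hT hU
      have hpT : p ∉ T := fun hc => hp (hT hc)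
      have hpU : p ∉ U := fun hc => hp (hU hc)
      rw [← Finset.erase_insert hpT, ← Finset.erase_insert hpU, h])]
    have key : ∀ T ∈ P.powerset,
        (-1 : ℝ)^(insert p T).card / (∏ r ∈ insert p T, (r:ℝ)) *
          (∑ r ∈ insert p T, Real.log r)^q
        = ∑ j ∈ Finset.range (q+1), (-(1/(p:ℝ))) *
            ((q.choose j : ℝ) * (Real.log p)^(q-j) *
              ((-1:ℝ)^T.card / (∏ r ∈ T, (r:ℝ)) * (∑ r ∈ T, Real.log r)^j)) := by
      intro T hT
      rw [Finset.mem_powerset] at hT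
      have hpT : p ∉ T := fun hc => hp (hT hc)
      rw [Finset.card_insert_of_notMem hpT, Finset.prod_insert hpT, Finset.sum_insert hpT]
      rw [add_comm (Real.log p), add_pow]
      rw [Finset.mul_sum]
      refine Finset.sum_congr rfl fun j hj => ?_
      rw [Finset.mem_range] at hj
      push_cast
      ring
    rw [Finset.sum_congr rfl key, Finset.sum_comm]
    have : ∀ j ∈ Finset.range (q+1),
        ∑ T ∈ P.powerset, (-(1/(p:ℝ))) *
            ((q.choose j : ℝ) * (Real.log p)^(q-j) *
              ((-1:ℝ)^T.card / (∏ r ∈ T, (r:ℝ)) * (∑ r ∈ T, Real.log r)^j))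
        = (-(1/(p:ℝ))) * ((q.choose j : ℝ) * (Real.log p)^(q-j) * GG j P) := by
      intro j _
      rw [← Finset.mul_sum, ← Finset.mul_sum]
      rfl
    rw [Finset.sum_congr rfl this, ← Finset.mul_sum, neg_mul, ← sub_eq_add_neg]
    simp only [GG]
  · rw [Finset.disjoint_left]
    intro T hT hT2
    rw [Finset.mem_powerset] at hT
    rw [Finset.mem_image] at hT2
    obtain ⟨U, _, rfl⟩ := hT2
    exact hp (hT (Finset.mem_insert_self p U))

lemma GG_empty_pos (q : ℕ) (hq : 1 ≤ q) : GG q ∅ = 0 := by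
  simp [GG, zero_pow (Nat.one_le_iff_ne_zero.mp hq)]

lemma GG_zero (P : Finset ℕ) : GG 0 P = fP P := by
  classical
  induction P using Finset.induction_on with
  | empty => simp [GG, fP]
  | @insert p P hp ih =>
    rw [GG_insert 0 P p hp, fP, Finset.prod_insert hp, ← fP]
    rw [Finset.range_one, Finset.sum_singleton, ih]
    simp only [Nat.choose_self, Nat.cast_one, pow_zero, Nat.zero_sub]
    ring

lemma fP_pos (P : Finset ℕ) (hP : ∀ p ∈ P, 2 ≤ p) : 0 < fP P := by
  apply Finset.prod_pos
  intro p hp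
  have h2 : (2:ℝ) ≤ p := by exact_mod_cast hP p hp
  have : 1/(p:ℝ) ≤ 1/2 := by
    apply div_le_div_of_nonneg_left <;> linarith
  linarith

lemma GG_bound_aux (q : ℕ) (hq : 1 ≤ q) (C V : ℝ) (hC : 0 ≤ C) (hV : 0 ≤ V) :
    ∀ P : Finset ℕ, (∀ p ∈ P, 2 ≤ p) →
    (∀ j, j < q → ∀ P' ⊆ P, |GG j P'| ≤ C * fP P' * V^j) →
    |GG q P| ≤ C * fP P *
      ∑ p ∈ P, (1/((p:ℝ)-1)) * ∑ j ∈ Finset.range q,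
        (q.choose j : ℝ) * (Real.log p)^(q-j) * V^j := by
  classical
  intro P
  induction P using Finset.induction_on with
  | empty => intro _ _; rw [GG_empty_pos q hq]; simp
  | @insert p P hp ih =>
    intro hprime hsub
    have hp2 : (2:ℝ) ≤ p := by exact_mod_cast hprime p (Finset.mem_insert_self p P)
    have hpne : (p:ℝ) ≠ 0 := by linarith
    have hp1 : (0:ℝ) < (p:ℝ) - 1 := by linarith
    have hpinv : 1/(p:ℝ) ≤ 1/2 := by
      apply div_le_div_of_nonneg_left <;> linarith
    have hpinv0 : 0 < 1/(p:ℝ) := by positivity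
    have hlogp : 0 ≤ Real.log p := Real.log_nonneg (by linarith)
    have hprime' : ∀ r ∈ P, 2 ≤ r := fun r hr => hprime r (Finset.mem_insert_of_mem hr)
    have hsub' : ∀ j, j < q → ∀ P' ⊆ P, |GG j P'| ≤ C * fP P' * V^j :=
      fun j hj P' hP' => hsub j hj P' (hP'.trans (Finset.subset_insert p P))
    have hfP : 0 ≤ fP P := (fP_pos P hprime').le
    have hGGq := ih hprime' hsub'
    have hrec := GG_insert q P p hp
    rw [Finset.sum_range_succ] at hrec
    simp only [Nat.choose_self, Nat.cast_one, Nat.sub_self, pow_zero, one_mul, mul_one] at hrec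
    set S := ∑ j ∈ Finset.range q, (q.choose j : ℝ) * (Real.log p)^(q-j) * GG j P with hS
    set B := ∑ j ∈ Finset.range q, (q.choose j : ℝ) * (Real.log p)^(q-j) * V^j with hB
    set X := ∑ r ∈ P, (1/((r:ℝ)-1)) * ∑ j ∈ Finset.range q,
        (q.choose j : ℝ) * (Real.log r)^(q-j) * V^j with hX
    have hXnn : 0 ≤ X := by
      apply Finset.sum_nonneg
      intro r hr
      have h2r : (2:ℝ) ≤ r := by exact_mod_cast hprime' r hr
      have : 0 ≤ Real.log r := Real.log_nonneg (by linarith)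
      apply mul_nonneg
      · have hr1 : (0:ℝ) < (r:ℝ) - 1 := by linarith
        positivity
      · apply Finset.sum_nonneg; intro j _; positivity
    have hBnn : 0 ≤ B := by
      apply Finset.sum_nonneg; intro j _; positivity
    have hSB : |S| ≤ C * fP P * B := by
      calc |S| ≤ ∑ j ∈ Finset.range q, |(q.choose j : ℝ) * (Real.log p)^(q-j) * GG j P| :=
            Finset.abs_sum_le_sum_abs _ _
        _ ≤ ∑ j ∈ Finset.range q, (q.choose j : ℝ) * (Real.log p)^(q-j) * (C * fP P * V^j) := by
            apply Finset.sum_le_sum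
            intro j hj
            rw [abs_mul, abs_of_nonneg (by positivity : (0:ℝ) ≤ (q.choose j : ℝ) * (Real.log p)^(q-j))]
            exact mul_le_mul_of_nonneg_left
              (hsub' j (Finset.mem_range.mp hj) P (Finset.Subset.refl P)) (by positivity)
        _ = C * fP P * B := by
            rw [hB, Finset.mul_sum]
            refine Finset.sum_congr rfl fun j _ => by ring
    have habs : |GG q (insert p P)| ≤ (1 - 1/p) * |GG q P| + (1/p) * |S| := by
      have : GG q (insert p P) = (1 - 1/(p:ℝ)) * GG q P - (1/p) * S := by
        rw [hrec]; ring
      rw [this]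
      calc |(1 - 1/(p:ℝ)) * GG q P - (1/p) * S|
          ≤ |(1 - 1/(p:ℝ)) * GG q P| + |(1/(p:ℝ)) * S| := abs_sub _ _
        _ = (1 - 1/p) * |GG q P| + (1/p) * |S| := by
            rw [abs_mul, abs_mul, abs_of_nonneg (by linarith : (0:ℝ) ≤ 1 - 1/(p:ℝ)),
              abs_of_nonneg hpinv0.le]
    have hfPi : fP (insert p P) = (1 - 1/(p:ℝ)) * fP P := by
      rw [fP, Finset.prod_insert hp]; rfl
    calc |GG q (insert p P)| ≤ (1 - 1/p) * |GG q P| + (1/p) * |S| := habs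
      _ ≤ (1 - 1/p) * (C * fP P * X) + (1/p) * (C * fP P * B) := by
          apply add_le_add
          · exact mul_le_mul_of_nonneg_left hGGq (by linarith)
          · exact mul_le_mul_of_nonneg_left hSB hpinv0.le
      _ = C * fP (insert p P) * ((1/((p:ℝ)-1)) * B + X) := by
          rw [hfPi]
          field_simp
          ring
      _ = C * fP (insert p P) * ∑ r ∈ insert p P, (1/((r:ℝ)-1)) * ∑ j ∈ Finset.range q,
            (q.choose j : ℝ) * (Real.log r)^(q-j) * V^j := by
          rw [Finset.sum_insert hp]

lemma GG_bound (q : ℕ) : ∃ C : ℝ, 1 ≤ C ∧ ∀ j, j ≤ q → ∀ (P : Finset ℕ) (V : ℝ), 1 ≤ V →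
    (∀ p ∈ P, 2 ≤ p) →
    (∀ k, 1 ≤ k → k ≤ q → ∑ p ∈ P, (Real.log p)^k / ((p:ℝ)-1) ≤ V^k) →
    |GG j P| ≤ C * fP P * V^j := by
  induction q with
  | zero =>
    refine ⟨1, le_refl 1, ?_⟩
    intro j hj P V hV hP _
    interval_cases j
    rw [GG_zero, pow_zero, abs_of_nonneg (fP_pos P hP).le]
    nlinarith [fP_pos P hP]
  | succ q ih =>
    obtain ⟨C0, hC0, hih⟩ := ih
    have h2pow : (1:ℝ) ≤ 2^(q+1) := one_le_pow₀ (by norm_num)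
    refine ⟨C0 * 2^(q+1), by nlinarith, ?_⟩
    intro j hj P V hV hP hyp
    have hVnn : (0:ℝ) ≤ V := by linarith
    have hfPnn : 0 ≤ fP P := (fP_pos P hP).le
    have hyp' : ∀ k, 1 ≤ k → k ≤ q → ∑ p ∈ P, (Real.log p)^k / ((p:ℝ)-1) ≤ V^k :=
      fun k h1 h2 => hyp k h1 (h2.trans (Nat.le_succ q))
    rcases eq_or_lt_of_le hj with rfl | h
    · -- j = q+1 main case
      have hsubbound : ∀ i, i < q+1 → ∀ P' ⊆ P, |GG i P'| ≤ C0 * fP P' * V^i := by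
        intro i hi P' hP'
        apply hih i (Nat.lt_succ_iff.mp hi) P' V hV (fun p hp => hP p (hP' hp))
        intro k h1 h2
        refine le_trans (Finset.sum_le_sum_of_subset_of_nonneg hP' ?_) (hyp' k h1 h2)
        intro p hp _
        have h2p : (2:ℝ) ≤ p := by exact_mod_cast hP p hp
        have hl : 0 ≤ Real.log p := Real.log_nonneg (by linarith)
        have hd : (0:ℝ) < (p:ℝ) - 1 := by linarith
        positivity
      have haux := GG_bound_aux (q+1) (Nat.succ_le_succ (Nat.zero_le q)) C0 V
        (by linarith) hVnn P hP hsubbound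
      refine haux.trans ?_
      have hstep : ∑ p ∈ P, (1/((p:ℝ)-1)) * ∑ i ∈ Finset.range (q+1),
            ((q+1).choose i : ℝ) * (Real.log p)^(q+1-i) * V^i ≤ 2^(q+1) * V^(q+1) := by
        have e1 : ∀ p ∈ P, (1/((p:ℝ)-1)) * ∑ i ∈ Finset.range (q+1),
              ((q+1).choose i : ℝ) * (Real.log p)^(q+1-i) * V^i
            = ∑ i ∈ Finset.range (q+1),
              ((q+1).choose i : ℝ) * V^i * ((Real.log p)^(q+1-i) / ((p:ℝ)-1)) := by
          intro p hp
          rw [Finset.mul_sum]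
          refine Finset.sum_congr rfl fun i _ => by ring
        rw [Finset.sum_congr rfl e1, Finset.sum_comm]
        have e2 : ∀ i ∈ Finset.range (q+1),
            ∑ p ∈ P, ((q+1).choose i : ℝ) * V^i * ((Real.log p)^(q+1-i)/((p:ℝ)-1))
            ≤ ((q+1).choose i : ℝ) * V^(q+1) := by
          intro i hi
          rw [← Finset.mul_sum]
          have hk := hyp (q+1-i) (by rw [Finset.mem_range] at hi; omega)
            (by omega)
          calc (((q+1).choose i : ℝ) * V^i) * ∑ p ∈ P, (Real.log p)^(q+1-i)/((p:ℝ)-1)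
              ≤ (((q+1).choose i : ℝ) * V^i) * V^(q+1-i) :=
                mul_le_mul_of_nonneg_left hk (by positivity)
            _ = ((q+1).choose i : ℝ) * V^(q+1) := by
                rw [mul_assoc, ← pow_add]
                congr 2
                rw [Finset.mem_range] at hi; omega
        refine le_trans (Finset.sum_le_sum e2) ?_
        rw [← Finset.sum_mul]
        refine mul_le_mul_of_nonneg_right ?_ (by positivity)
        have hmono : ∑ i ∈ Finset.range (q+1), ((q+1).choose i : ℝ)
            ≤ ∑ i ∈ Finset.range (q+2), ((q+1).choose i : ℝ) := by
          apply Finset.sum_le_sum_of_subset_of_nonneg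
          · exact Finset.range_subset_range.mpr (by omega)
          · intro i _ _; positivity
        refine hmono.trans ?_
        rw [← Nat.cast_sum, Nat.sum_range_choose]
        norm_num
      calc C0 * fP P * (∑ p ∈ P, (1/((p:ℝ)-1)) * ∑ i ∈ Finset.range (q+1),
              ((q+1).choose i : ℝ) * (Real.log p)^(q+1-i) * V^i)
          ≤ C0 * fP P * (2^(q+1) * V^(q+1)) :=
            mul_le_mul_of_nonneg_left hstep (mul_nonneg (by linarith) hfPnn)
        _ = C0 * 2^(q+1) * fP P * V^(q+1) := by ring
    · have hb := hih j (Nat.lt_succ_iff.mp h) P V hV hP hyp'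
      calc |GG j P| ≤ C0 * fP P * V^j := hb
        _ ≤ C0 * 2^(q+1) * fP P * V^j := by nlinarith [mul_nonneg (mul_nonneg (le_trans zero_le_one hC0) hfPnn) (pow_nonneg hVnn j)]

lemma moebius_prod_primes (T : Finset ℕ) (hT : ∀ p ∈ T, p.Prime) :
    Squarefree (∏ p ∈ T, p) ∧
      (ArithmeticFunction.moebius (∏ p ∈ T, p) : ℤ) = (-1)^T.card := by
  classical
  induction T using Finset.induction_on with
  | empty => simpa using squarefree_one
  | @insert p T hp ih =>
    have hpp : p.Prime := hT p (Finset.mem_insert_self p T)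
    have hT' : ∀ r ∈ T, r.Prime := fun r hr => hT r (Finset.mem_insert_of_mem hr)
    obtain ⟨hsq, hmu⟩ := ih hT'
    have hcop : Nat.Coprime p (∏ r ∈ T, r) := by
      apply Nat.Coprime.prod_right
      intro r hr
      exact (Nat.coprime_primes hpp (hT' r hr)).mpr (fun h => hp (h ▸ hr))
    rw [Finset.prod_insert hp, Finset.card_insert_of_notMem hp]
    constructor
    · exact (Nat.squarefree_mul hcop).mpr ⟨hpp.squarefree, hsq⟩
    · rw [ArithmeticFunction.isMultiplicative_moebius.map_mul_of_coprime hcop,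
        ArithmeticFunction.moebius_apply_prime hpp, hmu, pow_succ]
      ring

lemma Fq_eq (q : ℕ) (n : ℕ) (hn : n ≠ 0) :
    ∑ d ∈ n.divisors, ((ArithmeticFunction.moebius d : ℤ) : ℝ) / d * (Real.log d) ^ q
      = GG q n.primeFactors := by
  classical
  have h1 : ∑ d ∈ n.divisors, ((ArithmeticFunction.moebius d : ℤ) : ℝ) / d * (Real.log d) ^ q
      = ∑ d ∈ n.divisors.filter Squarefree,
          ((ArithmeticFunction.moebius d : ℤ) : ℝ) / d * (Real.log d) ^ q := by
    rw [Finset.sum_filter_of_ne]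
    intro d _ hd
    by_contra hsq
    rw [ArithmeticFunction.moebius_eq_zero_of_not_squarefree hsq] at hd
    simp at hd
  rw [h1, Nat.sum_divisors_filter_squarefree hn]
  have h2 : (UniqueFactorizationMonoid.normalizedFactors n).toFinset = n.primeFactors := by
    rw [Nat.factors_eq]
    rfl
  rw [h2]
  unfold GG
  refine Finset.sum_congr rfl fun T hT => ?_
  rw [Finset.mem_powerset] at hT
  have hTp : ∀ p ∈ T, p.Prime := fun p hp => Nat.prime_of_mem_primeFactors (hT hp)
  have hprod : T.val.prod = ∏ p ∈ T, p := by
    rw [Finset.prod_eq_multiset_prod]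
    simp
  obtain ⟨hsq, hmu⟩ := moebius_prod_primes T hTp
  have hne : ∀ p ∈ T, (p:ℝ) ≠ 0 := fun p hp => Nat.cast_ne_zero.mpr (hTp p hp).ne_zero
  rw [hprod, hmu]
  push_cast
  rw [Real.log_prod hne]

lemma block_card (J : ℕ) :
    (Nat.primesBelow (2^(J+1)) \ Nat.primesBelow (2^J)).card * J ≤ 2^(J+2) := by
  set S := Nat.primesBelow (2^(J+1)) \ Nat.primesBelow (2^J) with hS
  have hmem : ∀ p ∈ S, p.Prime ∧ 2^J ≤ p ∧ p < 2^(J+1) := by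
    intro p hp
    rw [hS, Finset.mem_sdiff, Nat.mem_primesBelow, Nat.mem_primesBelow] at hp
    obtain ⟨⟨h1, h2⟩, h3⟩ := hp
    exact ⟨h2, le_of_not_gt (fun hc => h3 ⟨hc, h2⟩), h1⟩
  have h1 : (2^J)^S.card ≤ ∏ p ∈ S, p := by
    apply Finset.pow_card_le_prod
    intro p hp
    exact (hmem p hp).2.1
  have h2 : ∏ p ∈ S, p ≤ primorial (2^(J+1)) := by
    have hsub : S ⊆ Finset.filter Nat.Prime (Finset.range (2^(J+1)+1)) := by
      intro p hp
      rw [Finset.mem_filter, Finset.mem_range]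
      have := (hmem p hp).2.2
      exact ⟨by omega, (hmem p hp).1⟩
    calc ∏ p ∈ S, p ≤ ∏ p ∈ Finset.filter Nat.Prime (Finset.range (2^(J+1)+1)), p := by
          apply Finset.prod_le_prod_of_subset_of_one_le' hsub
          intro p hp _
          exact (Finset.mem_filter.mp hp).2.one_lt.le
      _ = primorial (2^(J+1)) := rfl
  have h3 : primorial (2^(J+1)) ≤ 4^(2^(J+1)) := primorial_le_4_pow _
  have h4 : (2:ℕ)^(J * S.card) ≤ 2^(2^(J+2)) := by
    calc (2:ℕ)^(J * S.card) = (2^J)^S.card := by rw [pow_mul]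
      _ ≤ ∏ p ∈ S, p := h1
      _ ≤ 4^(2^(J+1)) := h2.trans h3
      _ = 2^(2^(J+2)) := by
          rw [(by norm_num : (4:ℕ) = 2^2), ← pow_mul]
          congr 1
          rw [pow_succ]
          ring
  have := (Nat.pow_le_pow_iff_right (by norm_num : 1 < 2)).mp h4
  rwa [Nat.mul_comm]

lemma log2_le_one : Real.log 2 ≤ 1 := by
  rw [← Real.log_exp 1]
  apply Real.log_le_log (by norm_num)
  have := Real.add_one_le_exp 1
  linarith

lemma SB_pow_bound (k : ℕ) (hk : 1 ≤ k) (J : ℕ) :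
    ∑ p ∈ Nat.primesBelow (2^J), (Real.log p)^k / p ≤ 8 * (J:ℝ)^k := by
  induction J with
  | zero =>
    have : Nat.primesBelow (2^0) = ∅ := by
      apply Finset.eq_empty_of_forall_notMem
      intro p hp
      rw [Nat.mem_primesBelow] at hp
      have h2 := hp.2.two_le
      have h1 := hp.1
      rw [pow_zero] at h1
      omega
    rw [this]
    simp [zero_pow (by omega : k ≠ 0)]
  | succ J ih =>
    have hsub : Nat.primesBelow (2^J) ⊆ Nat.primesBelow (2^(J+1)) := by
      intro p hp
      rw [Nat.mem_primesBelow] at hp ⊢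
      constructor
      · calc p < 2^J := hp.1
          _ ≤ 2^(J+1) := Nat.pow_le_pow_right (by norm_num) (by omega)
      · exact hp.2
    set S := Nat.primesBelow (2^(J+1)) \ Nat.primesBelow (2^J) with hSdef
    have hsplit : ∑ p ∈ Nat.primesBelow (2^(J+1)), (Real.log p)^k / p
        = ∑ p ∈ S, (Real.log p)^k / p + ∑ p ∈ Nat.primesBelow (2^J), (Real.log p)^k / p :=
      (Finset.sum_sdiff hsub).symm
    by_cases hJ0 : J = 0
    · subst hJ0
      have hS : S = ∅ := by
        apply Finset.eq_empty_of_forall_notMem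
        intro p hp
        rw [hSdef, Finset.mem_sdiff, Nat.mem_primesBelow, Nat.mem_primesBelow] at hp
        have := hp.1.2.two_le
        omega
      rw [hsplit, hS]
      simp only [Finset.sum_empty, zero_add]
      refine (ih).trans ?_
      have hz : ((0:ℕ):ℝ)^k = 0 := by
        rw [Nat.cast_zero]; exact zero_pow (by omega)
      rw [hz]
      norm_num
    · have hJ1 : 1 ≤ J := by omega
      have hJR : (1:ℝ) ≤ (J:ℝ) := by exact_mod_cast hJ1
      -- bound the block sum
      have hmem : ∀ p ∈ S, p.Prime ∧ 2^J ≤ p ∧ p < 2^(J+1) := by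
        intro p hp
        rw [hSdef, Finset.mem_sdiff, Nat.mem_primesBelow, Nat.mem_primesBelow] at hp
        obtain ⟨⟨h1, h2⟩, h3⟩ := hp
        refine ⟨h2, ?_, h1⟩
        by_contra hc
        exact h3 ⟨by omega, h2⟩
      have hterm : ∀ p ∈ S, (Real.log p)^k / p ≤ (((J:ℝ)+1) * Real.log 2)^k / 2^J := by
        intro p hp
        obtain ⟨hpp, hlo, hhi⟩ := hmem p hp
        have hp0 : (0:ℝ) < p := by exact_mod_cast hpp.pos
        have hlow : ((2:ℝ))^J ≤ p := by exact_mod_cast hlo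
        have hup : (p:ℝ) ≤ 2^(J+1) := by
          have : p ≤ 2^(J+1) := hhi.le
          exact_mod_cast this
        have hlog : Real.log p ≤ ((J:ℝ)+1) * Real.log 2 := by
          calc Real.log p ≤ Real.log (2^(J+1)) := Real.log_le_log hp0 hup
            _ = ((J:ℝ)+1) * Real.log 2 := by
                rw [Real.log_pow]
                push_cast
                ring
        have hlognn : 0 ≤ Real.log p := Real.log_nonneg (by exact_mod_cast hpp.one_lt.le)
        apply div_le_div₀ (by positivity) (pow_le_pow_left₀ hlognn hlog k) (by positivity) hlow
      have hblock : ∑ p ∈ S, (Real.log p)^k / p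
          ≤ (S.card : ℝ) * ((((J:ℝ)+1) * Real.log 2)^k / 2^J) := by
        have := Finset.sum_le_card_nsmul S _ _ hterm
        simpa [nsmul_eq_mul] using this
      have hcard : (S.card : ℝ) ≤ 2^(J+2) / J := by
        rw [le_div_iff₀ (by positivity)]
        exact_mod_cast block_card J
      have hblock2 : ∑ p ∈ S, (Real.log p)^k / p ≤ 8 * ((J:ℝ)+1)^(k-1) := by
        refine hblock.trans ?_
        have h1 : (S.card : ℝ) * ((((J:ℝ)+1) * Real.log 2)^k / 2^J)
            ≤ (2^(J+2)/(J:ℝ)) * ((((J:ℝ)+1) * Real.log 2)^k / 2^J) := by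
          apply mul_le_mul_of_nonneg_right hcard (by positivity)
        refine h1.trans ?_
        have hlog2 : (0:ℝ) ≤ Real.log 2 := Real.log_nonneg (by norm_num)
        have e1 : (2:ℝ)^(J+2)/(J:ℝ) * ((((J:ℝ)+1) * Real.log 2)^k / 2^J)
            = 4 * (((J:ℝ)+1)^k / J) * (Real.log 2)^k := by
          rw [mul_pow, pow_add]
          field_simp
          ring
        rw [e1]
        have h2 : (Real.log 2)^k ≤ 1 := pow_le_one₀ hlog2 log2_le_one
        have h3 : ((J:ℝ)+1)^k / J ≤ 2 * ((J:ℝ)+1)^(k-1) := by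
          rw [div_le_iff₀ (by linarith)]
          have : ((J:ℝ)+1)^k = ((J:ℝ)+1)^(k-1) * ((J:ℝ)+1) := by
            rw [← pow_succ]
            congr 1
            omega
          rw [this]
          have hp1 : (0:ℝ) ≤ ((J:ℝ)+1)^(k-1) := by positivity
          nlinarith
        have h4 : (0:ℝ) ≤ ((J:ℝ)+1)^k / J := by positivity
        calc 4 * (((J:ℝ)+1)^k / J) * (Real.log 2)^k ≤ 4 * (((J:ℝ)+1)^k / J) * 1 := by
              apply mul_le_mul_of_nonneg_left h2 (by positivity)
          _ = 4 * (((J:ℝ)+1)^k / J) := by ring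
          _ ≤ 4 * (2 * ((J:ℝ)+1)^(k-1)) := by
              apply mul_le_mul_of_nonneg_left h3 (by norm_num)
          _ = 8 * ((J:ℝ)+1)^(k-1) := by ring
      rw [hsplit]
      have hfin : 8 * (J:ℝ)^k + 8 * ((J:ℝ)+1)^(k-1) ≤ 8 * ((J:ℝ)+1)^k := by
        have e : ((J:ℝ)+1)^k = ((J:ℝ)+1)^(k-1) * ((J:ℝ)+1) := by
          rw [← pow_succ]; congr 1; omega
        have hJk : (J:ℝ)^k ≤ ((J:ℝ)+1)^(k-1) * (J:ℝ) := by
          have e2 : (J:ℝ)^k = (J:ℝ)^(k-1) * (J:ℝ) := by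
            rw [← pow_succ]; congr 1; omega
          rw [e2]
          apply mul_le_mul_of_nonneg_right _ (by positivity)
          apply pow_le_pow_left₀ (by positivity) (by linarith)
        rw [e]
        nlinarith
      calc ∑ p ∈ S, (Real.log p)^k / p + ∑ p ∈ Nat.primesBelow (2^J), (Real.log p)^k / p
          ≤ 8 * ((J:ℝ)+1)^(k-1) + 8 * (J:ℝ)^k := add_le_add hblock2 ih
        _ ≤ 8 * ((J:ℝ)+1)^k := by linarith [hfin]
        _ = 8 * ((J:ℕ).succ : ℝ)^k := by push_cast; ring

lemma sumPrimeFactors_bound (k : ℕ) (hk : 1 ≤ k) :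
    ∃ B : ℝ, ∀ᶠ n : ℕ in atTop,
      ∑ p ∈ n.primeFactors, (Real.log p)^k / ((p:ℝ)-1)
        ≤ B * (Real.log (Real.log n))^k := by
  classical
  refine ⟨16 * 4^k + 2 * Real.exp 1 * (k:ℝ)^k + 2, ?_⟩
  have ht : Tendsto (fun n : ℕ => Real.log (Real.log n)) atTop atTop :=
    Real.tendsto_log_atTop.comp (Real.tendsto_log_atTop.comp tendsto_natCast_atTop_atTop)
  filter_upwards [ht.eventually_ge_atTop 1, eventually_ge_atTop 16] with n hL1 hn16
  set x := Real.log n with hxdef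
  set L := Real.log x with hLdef
  have hn2 : (2:ℝ) ≤ (n:ℝ) := by
    have : (16:ℝ) ≤ (n:ℝ) := by exact_mod_cast hn16
    linarith
  have hx0 : 0 < x := Real.log_pos (by linarith)
  have hxe : Real.exp 1 ≤ x := by
    have h := Real.exp_le_exp.mpr hL1
    rwa [hLdef, Real.exp_log hx0] at h
  have hx1 : (1:ℝ) ≤ x := le_trans (by nlinarith [Real.add_one_le_exp 1]) hxe
  have hL0 : (0:ℝ) < L := by linarith
  have hn0 : 0 < n := by omega
  -- sum of logs of prime factors is at most x
  have hsumlog : ∑ p ∈ n.primeFactors, Real.log p ≤ x := by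
    have hd := Nat.prod_primeFactors_dvd n
    have hle : (∏ p ∈ n.primeFactors, p) ≤ n := Nat.le_of_dvd hn0 hd
    have hne : ∀ p ∈ n.primeFactors, ((p:ℝ)) ≠ 0 :=
      fun p hp => Nat.cast_ne_zero.mpr (Nat.prime_of_mem_primeFactors hp).ne_zero
    have hpos : 0 < ∏ p ∈ n.primeFactors, (p:ℝ) := by
      apply Finset.prod_pos
      intro p hp
      exact_mod_cast (Nat.prime_of_mem_primeFactors hp).pos
    calc ∑ p ∈ n.primeFactors, Real.log p
        = Real.log (∏ p ∈ n.primeFactors, (p:ℝ)) := (Real.log_prod hne).symm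
      _ ≤ x := by
          apply Real.log_le_log hpos
          rw [← Nat.cast_prod]
          exact_mod_cast hle
  -- generic term bound : 1/(p-1) ≤ 2/p
  have hterm2 : ∀ p ∈ n.primeFactors, (Real.log p)^k/((p:ℝ)-1) ≤ 2 * ((Real.log p)^k/p) := by
    intro p hp
    have hp2 : (2:ℝ) ≤ p := by exact_mod_cast (Nat.prime_of_mem_primeFactors hp).two_le
    have hlnn : (0:ℝ) ≤ (Real.log p)^k := by positivity
    have h : 1/((p:ℝ)-1) ≤ 2/p := by
      rw [div_le_div_iff₀ (by linarith) (by linarith)]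
      linarith
    calc (Real.log p)^k/((p:ℝ)-1) = (Real.log p)^k * (1/((p:ℝ)-1)) := by ring
      _ ≤ (Real.log p)^k * (2/p) := mul_le_mul_of_nonneg_left h hlnn
      _ = 2 * ((Real.log p)^k/p) := by ring
  set Ps := n.primeFactors.filter (fun p : ℕ => (p:ℝ) ≤ x) with hPs
  set Pb := n.primeFactors.filter (fun p : ℕ => ¬((p:ℝ) ≤ x)) with hPb
  have hsplit : ∑ p ∈ n.primeFactors, (Real.log p)^k/((p:ℝ)-1)
      = ∑ p ∈ Ps, (Real.log p)^k/((p:ℝ)-1) + ∑ p ∈ Pb, (Real.log p)^k/((p:ℝ)-1) :=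
    (Finset.sum_filter_add_sum_filter_not _ _ _).symm
  -- SMALL PART
  have hsmall : ∑ p ∈ Ps, (Real.log p)^k/((p:ℝ)-1) ≤ 16 * 4^k * L^k := by
    set N : ℕ := Nat.floor x + 1 with hN
    set J : ℕ := Nat.log 2 N + 1 with hJ
    have hNx : N < 2^J := Nat.lt_pow_succ_log_self (by norm_num) N
    have hsub : Ps ⊆ Nat.primesBelow (2^J) := by
      intro p hp
      rw [hPs, Finset.mem_filter] at hp
      rw [Nat.mem_primesBelow]
      have hpx : (p:ℝ) ≤ x := hp.2
      have : p ≤ Nat.floor x := Nat.le_floor hpx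
      exact ⟨by omega, Nat.prime_of_mem_primeFactors hp.1⟩
    have h1 : ∑ p ∈ Ps, (Real.log p)^k/((p:ℝ)-1)
        ≤ ∑ p ∈ Ps, 2 * ((Real.log p)^k/p) := by
      apply Finset.sum_le_sum
      intro p hp
      exact hterm2 p (Finset.mem_of_mem_filter p hp)
    have h2 : ∑ p ∈ Ps, 2 * ((Real.log p)^k/p)
        ≤ ∑ p ∈ Nat.primesBelow (2^J), 2 * ((Real.log p)^k/p) := by
      apply Finset.sum_le_sum_of_subset_of_nonneg hsub
      intro p hp _
      have hp1 : (1:ℝ) ≤ p := by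
        rw [Nat.mem_primesBelow] at hp
        exact_mod_cast hp.2.one_lt.le
      have : 0 ≤ Real.log p := Real.log_nonneg hp1
      positivity
    have h3 : ∑ p ∈ Nat.primesBelow (2^J), 2 * ((Real.log p)^k/p) ≤ 2 * (8 * (J:ℝ)^k) := by
      rw [← Finset.mul_sum]
      exact mul_le_mul_of_nonneg_left (SB_pow_bound k hk J) (by norm_num)
    -- J ≤ 4L
    have hJL : (J:ℝ) ≤ 4 * L := by
      have hN1 : 1 ≤ N := by omega
      have hlogN : (Nat.log 2 N : ℝ) * Real.log 2 ≤ Real.log N := by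
        have hpow : (2:ℕ)^(Nat.log 2 N) ≤ N := Nat.pow_log_le_self 2 (by omega)
        have hpowR : ((2:ℝ))^(Nat.log 2 N) ≤ (N:ℝ) := by exact_mod_cast hpow
        calc (Nat.log 2 N : ℝ) * Real.log 2 = Real.log ((2:ℝ)^(Nat.log 2 N)) := by
              rw [Real.log_pow]
          _ ≤ Real.log N := Real.log_le_log (by positivity) hpowR
      have hNle : (N:ℝ) ≤ 2*x := by
        have h1 : (Nat.floor x : ℝ) ≤ x := Nat.floor_le hx0.le
        have : (N:ℝ) = (Nat.floor x : ℝ) + 1 := by exact_mod_cast rfl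
        rw [this]
        linarith
      have hlogN2 : Real.log N ≤ 1 + L := by
        calc Real.log N ≤ Real.log (2*x) := Real.log_le_log (by exact_mod_cast hN1) hNle
          _ = Real.log 2 + L := by rw [Real.log_mul (by norm_num) (by linarith)]
          _ ≤ 1 + L := by linarith [log2_le_one]
      have hlog2lb : (0.6931471803:ℝ) < Real.log 2 := Real.log_two_gt_d9
      have hNatlog : (Nat.log 2 N : ℝ) ≤ (1 + L)/Real.log 2 := by
        rw [le_div_iff₀ (by linarith)]
        linarith
      have h3L : (1 + L)/Real.log 2 ≤ 3*L := by
        rw [div_le_iff₀ (by linarith)]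
        nlinarith
      have hJcast : (J:ℝ) = (Nat.log 2 N : ℝ) + 1 := by exact_mod_cast rfl
      rw [hJcast]
      linarith [hNatlog.trans h3L]
    calc ∑ p ∈ Ps, (Real.log p)^k/((p:ℝ)-1) ≤ 2 * (8 * (J:ℝ)^k) := le_trans h1 (le_trans h2 h3)
      _ = 16 * (J:ℝ)^k := by ring
      _ ≤ 16 * (4*L)^k := by
          apply mul_le_mul_of_nonneg_left _ (by norm_num)
          exact pow_le_pow_left₀ (by positivity) hJL k
      _ = 16 * 4^k * L^k := by rw [mul_pow]; ring
  -- BIG PART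
  have hbig : ∑ p ∈ Pb, (Real.log p)^k/((p:ℝ)-1)
      ≤ 2 * Real.exp 1 * (k:ℝ)^k * L^k + 2 * L^k := by
    have hkey : ∀ p : ℕ, p.Prime → x < (p:ℝ) →
        (Real.log p)^(k-1)/(p:ℝ) ≤ Real.exp 1 * (k:ℝ)^(k-1) * L^(k-1) / x := by
      intro p hpp hxp
      have hp0 : (0:ℝ) < p := by exact_mod_cast hpp.pos
      have hp1 : (1:ℝ) ≤ p := by exact_mod_cast hpp.one_lt.le
      rcases Nat.lt_or_ge k 2 with hk2 | hk2
      · -- k = 1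
        have hk1 : k = 1 := by omega
        subst hk1
        simp only [Nat.sub_self, pow_zero]
        rw [div_le_div_iff₀ hp0 hx0]
        have he1 : (1:ℝ) ≤ Real.exp 1 := by
          have := Real.add_one_le_exp 1; linarith
        have hx_le_p : x ≤ (p:ℝ) := hxp.le
        nlinarith
      · -- k ≥ 2
        set m : ℕ := k - 1 with hm
        have hm1 : 1 ≤ m := by omega
        have hmR : (1:ℝ) ≤ (m:ℝ) := by exact_mod_cast hm1
        set ε : ℝ := 1/((m:ℝ)*L) with hε
        have hε0 : 0 < ε := by positivity
        have h1 : Real.log p ≤ (p:ℝ)^ε/ε := Real.log_le_rpow_div (by positivity) hε0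
        have hlognn : 0 ≤ Real.log p := Real.log_nonneg hp1
        have h2 : (Real.log p)^m ≤ ((p:ℝ)^ε/ε)^m := pow_le_pow_left₀ hlognn h1 m
        have h3 : ((p:ℝ)^ε/ε)^m = (p:ℝ)^(ε*(m:ℝ)) / ε^m := by
          rw [div_pow, ← Real.rpow_natCast ((p:ℝ)^ε) m, ← Real.rpow_mul (by positivity)]
        have hεm : ε*(m:ℝ) = 1/L := by
          rw [hε]; field_simp
        have hεmle : ε*(m:ℝ) - 1 ≤ 0 := by
          rw [hεm]
          have : 1/L ≤ 1 := by
            rw [div_le_one hL0]; linarith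
          linarith
        have h4 : (p:ℝ)^(ε*(m:ℝ)-1) ≤ x^(ε*(m:ℝ)-1) :=
          Real.rpow_le_rpow_of_nonpos hx0 hxp.le hεmle
        have h5 : x^(ε*(m:ℝ)-1) = Real.exp 1 / x := by
          rw [hεm, Real.rpow_sub hx0, Real.rpow_one]
          congr 1
          rw [Real.rpow_def_of_pos hx0, ← hLdef]
          congr 1
          field_simp
        have h6 : (Real.log p)^m/(p:ℝ) ≤ (1/ε^m) * (p:ℝ)^(ε*(m:ℝ)-1) := by
          calc (Real.log p)^m/(p:ℝ) ≤ ((p:ℝ)^ε/ε)^m/(p:ℝ) := by gcongr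
            _ = (1/ε^m) * ((p:ℝ)^(ε*(m:ℝ))/(p:ℝ)) := by rw [h3]; ring
            _ = (1/ε^m) * (p:ℝ)^(ε*(m:ℝ)-1) := by
                rw [Real.rpow_sub hp0, Real.rpow_one]
        have h7 : (1/ε^m) = ((m:ℝ)*L)^m := by
          rw [hε]; rw [one_div, one_div, inv_pow, inv_inv]
        have h8 : ((m:ℝ)*L)^m ≤ (k:ℝ)^(k-1) * L^(k-1) := by
          rw [mul_pow, hm]
          apply mul_le_mul_of_nonneg_right _ (by positivity)
          apply pow_le_pow_left₀ (by positivity) _ _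
          exact_mod_cast Nat.sub_le k 1
        calc (Real.log p)^(k-1)/(p:ℝ) = (Real.log p)^m/(p:ℝ) := by rw [hm]
          _ ≤ (1/ε^m) * (p:ℝ)^(ε*(m:ℝ)-1) := h6
          _ ≤ (1/ε^m) * (Real.exp 1 / x) := by
              apply mul_le_mul_of_nonneg_left _ (by positivity)
              rw [← h5]; exact h4
          _ = ((m:ℝ)*L)^m * (Real.exp 1 / x) := by rw [h7]
          _ ≤ ((k:ℝ)^(k-1) * L^(k-1)) * (Real.exp 1 / x) := by
              apply mul_le_mul_of_nonneg_right h8 (by positivity)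
          _ = Real.exp 1 * (k:ℝ)^(k-1) * L^(k-1) / x := by ring
    have hbig1 : ∑ p ∈ Pb, (Real.log p)^k/((p:ℝ)-1)
        ≤ ∑ p ∈ Pb, Real.log p * (2 * Real.exp 1 * (k:ℝ)^(k-1) * L^(k-1) / x) := by
      apply Finset.sum_le_sum
      intro p hp
      rw [hPb, Finset.mem_filter] at hp
      obtain ⟨hpmem, hpx⟩ := hp
      have hpp := Nat.prime_of_mem_primeFactors hpmem
      have hxp : x < (p:ℝ) := not_le.mp hpx
      have hp1 : (1:ℝ) ≤ p := by exact_mod_cast hpp.one_lt.le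
      have hlognn : 0 ≤ Real.log p := Real.log_nonneg hp1
      calc (Real.log p)^k/((p:ℝ)-1) ≤ 2 * ((Real.log p)^k/p) := hterm2 p hpmem
        _ = 2 * Real.log p * ((Real.log p)^(k-1)/p) := by
            have epow : (Real.log p)^k = Real.log p * (Real.log p)^(k-1) := by
              conv_lhs => rw [show k = 1 + (k-1) by omega]
              rw [pow_add, pow_one]
            rw [epow]
            ring
        _ ≤ 2 * Real.log p * (Real.exp 1 * (k:ℝ)^(k-1) * L^(k-1) / x) := by
            apply mul_le_mul_of_nonneg_left (hkey p hpp hxp) (by positivity)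
        _ = Real.log p * (2 * Real.exp 1 * (k:ℝ)^(k-1) * L^(k-1) / x) := by ring
    have hbig2 : ∑ p ∈ Pb, Real.log p * (2 * Real.exp 1 * (k:ℝ)^(k-1) * L^(k-1) / x)
        ≤ x * (2 * Real.exp 1 * (k:ℝ)^(k-1) * L^(k-1) / x) := by
      rw [← Finset.sum_mul]
      apply mul_le_mul_of_nonneg_right _ (by positivity)
      refine le_trans (Finset.sum_le_sum_of_subset_of_nonneg (Finset.filter_subset _ _) ?_) hsumlog
      intro p hp _
      exact Real.log_nonneg (by exact_mod_cast (Nat.prime_of_mem_primeFactors hp).one_lt.le)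
    have hbig3 : x * (2 * Real.exp 1 * (k:ℝ)^(k-1) * L^(k-1) / x)
        = 2 * Real.exp 1 * (k:ℝ)^(k-1) * L^(k-1) := by
      field_simp
    have hfin : 2 * Real.exp 1 * (k:ℝ)^(k-1) * L^(k-1) ≤ 2 * Real.exp 1 * (k:ℝ)^k * L^k := by
      have hkR : (1:ℝ) ≤ (k:ℝ) := by exact_mod_cast hk
      have e0 : (0:ℝ) < Real.exp 1 := Real.exp_pos 1
      have h1 : (k:ℝ)^(k-1) ≤ (k:ℝ)^k := pow_le_pow_right₀ hkR (Nat.sub_le k 1)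
      have h2 : L^(k-1) ≤ L^k := pow_le_pow_right₀ (by linarith) (Nat.sub_le k 1)
      have p1 : (0:ℝ) ≤ (k:ℝ)^(k-1) := by positivity
      have p2 : (0:ℝ) ≤ L^(k-1) := by positivity
      have p3 : (0:ℝ) ≤ (k:ℝ)^k := by positivity
      have hmul : (k:ℝ)^(k-1) * L^(k-1) ≤ (k:ℝ)^k * L^k := mul_le_mul h1 h2 p2 p3
      calc 2 * Real.exp 1 * (k:ℝ)^(k-1) * L^(k-1)
          = 2 * Real.exp 1 * ((k:ℝ)^(k-1) * L^(k-1)) := by ring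
        _ ≤ 2 * Real.exp 1 * ((k:ℝ)^k * L^k) :=
            mul_le_mul_of_nonneg_left hmul (by positivity)
        _ = 2 * Real.exp 1 * (k:ℝ)^k * L^k := by ring
    calc ∑ p ∈ Pb, (Real.log p)^k/((p:ℝ)-1)
        ≤ x * (2 * Real.exp 1 * (k:ℝ)^(k-1) * L^(k-1) / x) := le_trans hbig1 hbig2
      _ = 2 * Real.exp 1 * (k:ℝ)^(k-1) * L^(k-1) := hbig3
      _ ≤ 2 * Real.exp 1 * (k:ℝ)^k * L^k := hfin
      _ ≤ 2 * Real.exp 1 * (k:ℝ)^k * L^k + 2 * L^k := by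
          have : (0:ℝ) ≤ L^k := by positivity
          linarith
  rw [hsplit]
  have : (16 * 4^k + 2 * Real.exp 1 * (k:ℝ)^k + 2) * L^k
      = 16 * 4^k * L^k + (2 * Real.exp 1 * (k:ℝ)^k * L^k + 2 * L^k) := by ring
  rw [this]
  exact add_le_add hsmall hbig

lemma fEuler_eq_fP (n : ℕ) : fEuler n 1 = fP n.primeFactors := by
  unfold fEuler fP
  refine Finset.prod_congr rfl fun p hp => ?_
  have hp0 : (0:ℝ) ≤ p := Nat.cast_nonneg p
  rw [Real.rpow_neg hp0, Real.rpow_one, one_div]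

lemma combined_bound (q : ℕ) : ∃ A : ℝ, 1 ≤ A ∧ ∀ k, 1 ≤ k → k ≤ q →
    ∀ᶠ n : ℕ in atTop, ∑ p ∈ n.primeFactors, (Real.log p)^k / ((p:ℝ)-1)
      ≤ A * (Real.log (Real.log n))^k := by
  have ht : Tendsto (fun n : ℕ => Real.log (Real.log n)) atTop atTop :=
    Real.tendsto_log_atTop.comp (Real.tendsto_log_atTop.comp tendsto_natCast_atTop_atTop)
  induction q with
  | zero => exact ⟨1, le_refl 1, fun k h1 h2 => absurd (h1.trans h2) (by norm_num)⟩
  | succ q ih =>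
    obtain ⟨A, hA1, hA⟩ := ih
    obtain ⟨B, hB⟩ := sumPrimeFactors_bound (q+1) (by omega)
    refine ⟨max A (max B 1), le_trans hA1 (le_max_left _ _), ?_⟩
    intro k h1 h2
    rcases Nat.lt_or_ge k (q+1) with h | h
    · filter_upwards [hA k h1 (by omega), ht.eventually_ge_atTop 1] with n hn hL1
      refine hn.trans ?_
      apply mul_le_mul_of_nonneg_right (le_max_left _ _)
      positivity
    · have hk : k = q+1 := by omega
      subst hk
      filter_upwards [hB, ht.eventually_ge_atTop 1] with n hn hL1
      refine hn.trans ?_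
      apply mul_le_mul_of_nonneg_right ((le_max_left B 1).trans (le_max_right A _))
      positivity

/-- **Lemma 2.4.** For any non-negative integer `q`,
`F_q(n) = Σ_{d | n} (μ(d)/d)(log d)^q = O(f(n,1)(log log n)^q)`,
where `f(n,s) = ∏_{p | n}(1 − p^{−s})` and `μ` is the Möbius function. -/
theorem moebius_log_divisor_sum (q : ℕ) :
    ∃ C : ℝ, 0 < C ∧ ∀ᶠ n : ℕ in atTop,
      |∑ d ∈ n.divisors, ((ArithmeticFunction.moebius d : ℤ) : ℝ) / d * (Real.log d) ^ q|
        ≤ C * fEuler n 1 * (Real.log (Real.log n)) ^ q := by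
  obtain ⟨C, hC1, hC⟩ := GG_bound q
  obtain ⟨A, hA1, hA⟩ := combined_bound q
  have hC0 : (0:ℝ) < C := lt_of_lt_of_le one_pos hC1
  have hA0 : (0:ℝ) < A := lt_of_lt_of_le one_pos hA1
  refine ⟨C * A^q, by positivity, ?_⟩
  have ht : Tendsto (fun n : ℕ => Real.log (Real.log n)) atTop atTop :=
    Real.tendsto_log_atTop.comp (Real.tendsto_log_atTop.comp tendsto_natCast_atTop_atTop)
  have hev : ∀ᶠ n : ℕ in atTop, ∀ k ∈ Finset.Icc 1 q,
      ∑ p ∈ n.primeFactors, (Real.log p)^k / ((p:ℝ)-1)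
        ≤ A * (Real.log (Real.log n))^k := by
    rw [Filter.eventually_all_finset]
    intro k hk
    exact hA k (Finset.mem_Icc.mp hk).1 (Finset.mem_Icc.mp hk).2
  filter_upwards [hev, ht.eventually_ge_atTop 1, eventually_ge_atTop 1] with n hk hL1 hn1
  have hn0 : n ≠ 0 := by omega
  rw [Fq_eq q n hn0, fEuler_eq_fP]
  set L := Real.log (Real.log n) with hLdef
  have hprimes : ∀ p ∈ n.primeFactors, 2 ≤ p :=
    fun p hp => (Nat.prime_of_mem_primeFactors hp).two_le
  have hAL : (1:ℝ) ≤ A * L := by nlinarith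
  have hVk : ∀ k', 1 ≤ k' → k' ≤ q →
      ∑ p ∈ n.primeFactors, (Real.log p)^k' / ((p:ℝ)-1) ≤ (A*L)^k' := by
    intro k' h1 h2
    refine (hk k' (Finset.mem_Icc.mpr ⟨h1, h2⟩)).trans ?_
    rw [mul_pow]
    apply mul_le_mul_of_nonneg_right (le_self_pow₀ hA1 (by omega))
    have : (0:ℝ) ≤ L := by linarith
    positivity
  have hmain := hC q (le_refl q) n.primeFactors (A*L) hAL hprimes hVk
  refine hmain.trans ?_
  rw [mul_pow]
  apply le_of_eq
  ring
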